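/- Let (E, ‖·‖) be a two-dimensional real normed vector space. Then there exist six points y₀, y₁, …, y₅ ∈ E (indexed cyclically modulo 6) such that: (i) ‖y_i‖ = 1 for every i; (ii) ‖y_{i+1} − y_i‖ = 1 for every i; (iii) y_{i+3} = −y_i for every i; and (iv) every vector v ∈ E lies in cone(y_i, y_{i+1}) for some i, where cone(a, b) = {α·a + β·b : α, β ≥ 0}. -/

import Mathlib

/-- The cone generated by `a` and `b`: all non-negative combinations `α • a + β • b`. -/
def cone {E : Type*} [AddCommGroup E] [Module ℝ E] (a b : E) : Set E :=
  {w | ∃ α β : ℝ, 0 ≤ α ∧ 0 ≤ β ∧ w = α • a + β • b}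

/-- Lemma 2 of the paper (hexagon construction): in a two-dimensional real normed vector
space there are six unit vectors `y₀, …, y₅` (indexed cyclically modulo 6) with consecutive
ones at distance 1, symmetric about the origin, whose six cones cover the plane. -/
theorem exists_hexagon
    {E : Type*} [NormedAddCommGroup E] [NormedSpace ℝ E]
    (hdim : Module.finrank ℝ E = 2) :
    ∃ y : ZMod 6 → E,
      (∀ i, ‖y i‖ = 1) ∧
      (∀ i, ‖y (i + 1) - y i‖ = 1) ∧
      (∀ i, y (i + 3) = -y i) ∧
      (∀ v : E, ∃ i, v ∈ cone (y i) (y (i + 1))) := by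
  have hfd : FiniteDimensional ℝ E := FiniteDimensional.of_finrank_eq_succ hdim
  have hnt : Nontrivial E := by
    apply Module.nontrivial_of_finrank_pos (R := ℝ); omega
  obtain ⟨x0, hx0⟩ := exists_ne (0 : E)
  set y0 : E := ‖x0‖⁻¹ • x0 with hy0def
  have hy0 : ‖y0‖ = 1 := by
    rw [hy0def, norm_smul, norm_inv, norm_norm, inv_mul_cancel₀ (norm_ne_zero_iff.2 hx0)]
  have hy0ne : y0 ≠ 0 := by
    intro h; rw [h] at hy0; simp at hy0
  have hspan : Submodule.span ℝ {y0} ≠ ⊤ := by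
    intro h
    have h1 : Module.finrank ℝ (Submodule.span ℝ {y0}) = 1 := finrank_span_singleton hy0ne
    rw [h, finrank_top, hdim] at h1
    omega
  obtain ⟨w, hw⟩ : ∃ w : E, w ∉ Submodule.span ℝ {y0} := by
    by_contra h
    push_neg at h
    exact hspan (Submodule.eq_top_iff'.2 h)
  set γ : ℝ → E := fun t => (1 - 2 * t) • y0 + (t * (1 - t)) • w with hγdef
  have hγ0 : γ 0 = y0 := by simp [hγdef]
  have hγ1 : γ 1 = -y0 := by rw [hγdef]; simp; module
  have hγne : ∀ t ∈ Set.Icc (0:ℝ) 1, γ t ≠ 0 := by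
    rintro t ⟨ht0, ht1⟩ h
    rcases eq_or_lt_of_le ht0 with rfl | h0
    · rw [hγ0] at h; exact hy0ne h
    rcases eq_or_lt_of_le ht1 with rfl | h1
    · rw [hγ1] at h; exact hy0ne (neg_eq_zero.1 h)
    · have htt : t * (1 - t) ≠ 0 := ne_of_gt (mul_pos h0 (by linarith))
      apply hw
      have h2 : (t * (1 - t)) • w = -((1 - 2 * t) • y0) := by
        rw [hγdef] at h; simp only at h; linear_combination (norm := module) h
      have h3 : w = (t * (1 - t))⁻¹ • (-((1 - 2 * t) • y0)) := by
        rw [← h2, smul_smul, inv_mul_cancel₀ htt, one_smul]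
      rw [h3]
      exact Submodule.smul_mem _ _ (Submodule.neg_mem _
        (Submodule.smul_mem _ _ (Submodule.mem_span_singleton_self y0)))
  have hγcont : Continuous γ := by
    apply Continuous.add
    · exact (continuous_const.sub (continuous_const.mul continuous_id)).smul continuous_const
    · exact (continuous_id.mul (continuous_const.sub continuous_id)).smul continuous_const
  set F : ℝ → ℝ := fun t => ‖‖γ t‖⁻¹ • γ t - y0‖ with hFdef
  have hFcont : ContinuousOn F (Set.Icc 0 1) := by
    apply ContinuousOn.norm
    apply ContinuousOn.sub _ continuousOn_const
    exact ContinuousOn.smul ((hγcont.norm.continuousOn).inv₀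
      (fun t ht => norm_ne_zero_iff.2 (hγne t ht))) hγcont.continuousOn
  have hF0 : F 0 = 0 := by simp [hFdef, hγ0, hy0]
  have hF1 : F 1 = 2 := by
    rw [hFdef]
    simp only [hγ1, norm_neg, hy0, inv_one, one_smul]
    rw [show -y0 - y0 = (-2 : ℝ) • y0 by module, norm_smul, hy0]
    norm_num
  have h1mem : (1:ℝ) ∈ Set.Icc (F 0) (F 1) := by rw [hF0, hF1]; norm_num
  obtain ⟨t, ht, hFt⟩ := intermediate_value_Icc (by norm_num : (0:ℝ) ≤ 1) hFcont h1mem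
  set y1 : E := ‖γ t‖⁻¹ • γ t with hy1def
  have hy1 : ‖y1‖ = 1 := by
    rw [hy1def, norm_smul, norm_inv, norm_norm,
      inv_mul_cancel₀ (norm_ne_zero_iff.2 (hγne t ht))]
  have h10 : ‖y1 - y0‖ = 1 := hFt
  have hindep : ∀ a b : ℝ, a • y0 + b • y1 = 0 → a = 0 ∧ b = 0 := by
    intro a b hab
    have hy1span : y1 ∉ Submodule.span ℝ {y0} := by
      intro h
      obtain ⟨c, hc⟩ := Submodule.mem_span_singleton.1 h
      have habs : |c| = 1 := by
        have h' := hy1; rw [← hc, norm_smul, hy0, mul_one] at h'; simpa using h'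
      rcases (abs_eq (by norm_num : (0:ℝ) ≤ 1)).1 habs with h1 | h1
      · rw [h1, one_smul] at hc
        rw [← hc, sub_self, norm_zero] at h10; norm_num at h10
      · rw [h1, neg_one_smul] at hc
        rw [← hc, show -y0 - y0 = (-2:ℝ) • y0 by module, norm_smul, hy0] at h10
        norm_num at h10
    by_cases hb : b = 0
    · subst hb
      simp only [zero_smul, add_zero, smul_eq_zero] at hab
      rcases hab with h | h
      · exact ⟨h, rfl⟩
      · exact absurd h hy0ne
    · exfalso
      apply hy1span
      have h5 : b • y1 = (-a) • y0 := by linear_combination (norm := module) hab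
      have h4 : y1 = (-a * b⁻¹) • y0 := by
        calc y1 = b⁻¹ • (b • y1) := by rw [smul_smul, inv_mul_cancel₀ hb, one_smul]
          _ = (-a * b⁻¹) • y0 := by rw [h5, smul_smul, mul_comm]
      rw [h4]
      exact Submodule.smul_mem _ _ (Submodule.mem_span_singleton_self y0)
  have hspan2 : ∀ v : E, ∃ a b : ℝ, v = a • y0 + b • y1 := by
    intro v
    have hli : LinearIndependent ℝ ![y0, y1] := by
      rw [LinearIndependent.pair_iff]
      intro a b hab
      exact hindep a b hab
    have hsp := hli.span_eq_top_of_card_eq_finrank (by simp [hdim])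
    have hrange : Set.range ![y0, y1] = {y0, y1} := by
      simp [Matrix.range_cons, Matrix.range_empty, Set.pair_comm]
    rw [hrange] at hsp
    obtain ⟨a, b, hab⟩ := Submodule.mem_span_pair.1
      (hsp ▸ Submodule.mem_top : v ∈ Submodule.span ℝ {y0, y1})
    exact ⟨a, b, hab.symm⟩
  set Y : Fin 6 → E := ![y0, y1, y1 - y0, -y0, -y1, y0 - y1] with hYdef
  refine ⟨fun i => Y i, ?_, ?_, ?_, ?_⟩
  · intro i
    fin_cases i
    · exact hy0
    · exact hy1
    · exact h10
    · show ‖-y0‖ = 1; rw [norm_neg]; exact hy0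
    · show ‖-y1‖ = 1; rw [norm_neg]; exact hy1
    · show ‖y0 - y1‖ = 1; rw [norm_sub_rev]; exact h10
  · intro i
    fin_cases i
    · exact h10
    · show ‖y1 - y0 - y1‖ = 1; rw [show y1 - y0 - y1 = -y0 by module, norm_neg]; exact hy0
    · show ‖-y0 - (y1 - y0)‖ = 1; rw [show -y0 - (y1 - y0) = -y1 by module, norm_neg]; exact hy1
    · show ‖-y1 - -y0‖ = 1; rw [show -y1 - -y0 = -(y1 - y0) by module, norm_neg]; exact h10
    · show ‖y0 - y1 - -y1‖ = 1; rw [show y0 - y1 - -y1 = y0 by module]; exact hy0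
    · show ‖y0 - (y0 - y1)‖ = 1; rw [show y0 - (y0 - y1) = y1 by module]; exact hy1
  · intro i
    fin_cases i
    · show -y0 = -y0; rfl
    · show -y1 = -y1; rfl
    · show y0 - y1 = -(y1 - y0); module
    · show y0 = - -y0; module
    · show y1 = - -y1; module
    · show y1 - y0 = -(y0 - y1); module
  · intro v
    obtain ⟨a, b, hab⟩ := hspan2 v
    rcases le_or_gt 0 a with ha | ha <;> rcases le_or_gt 0 b with hb | hb <;>
      rcases le_or_gt 0 (a + b) with hab' | hab'
    · exact ⟨0, a, b, ha, hb, by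
        show v = a • y0 + b • y1; exact hab⟩
    · exact ⟨0, a, b, ha, hb, by
        show v = a • y0 + b • y1; exact hab⟩
    · exact ⟨5, -b, a + b, by linarith, hab', by
        show v = (-b) • (y0 - y1) + (a + b) • y0
        rw [hab]; module⟩
    · exact ⟨4, -(a + b), a, by linarith, ha, by
        show v = (-(a + b)) • (-y1) + a • (y0 - y1)
        rw [hab]; module⟩
    · exact ⟨1, a + b, -a, hab', by linarith, by
        show v = (a + b) • y1 + (-a) • (y1 - y0)
        rw [hab]; module⟩
    · exact ⟨2, b, -(a + b), hb, by linarith, by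
        show v = b • (y1 - y0) + (-(a + b)) • (-y0)
        rw [hab]; module⟩
    · exact absurd hab' (by linarith)
    · exact ⟨3, -a, -b, by linarith, by linarith, by
        show v = (-a) • (-y0) + (-b) • (-y1)
        rw [hab]; module⟩
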